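/- Let p be a prime and let J ∈ ℤ^{m×m} be a direct sum of Jordan blocks J₁ ⊕ ⋯ ⊕ J_d with integer eigenvalues, at least one of which is nonzero. Then the sequence n ↦ ν_p(J^{n+1}) − ν_p(J^n) is eventually periodic. -/

import Mathlib

/-- The `p`-adic valuation of a nonzero integer matrix: the minimum of the `p`-adic
valuations of its nonzero entries. -/
noncomputable def matPadicVal (p : ℕ) {a b : Type*} [Fintype a] [Fintype b]
    (M : Matrix a b ℤ) : ℕ :=
  sInf {v : ℕ | ∃ i j, M i j ≠ 0 ∧ padicValInt p (M i j) = v}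

/-- A single `s × s` Jordan block with eigenvalue `λ`. -/
def jordanBlock (s : ℕ) (lam : ℤ) : Matrix (Fin s) (Fin s) ℤ :=
  fun i j => if i = j then lam else if (i : ℕ) + 1 = (j : ℕ) then 1 else 0

section Aux

lemma carry_mono {p k L j i m : ℕ} (hp : p.Prime) (hk : k < p ^ L) (hLj : L ≤ j) (hji : j ≤ i)
    (hc : p ^ i ≤ k % p ^ i + m % p ^ i) : p ^ j ≤ k % p ^ j + m % p ^ j := by
  have hple : ∀ {u v : ℕ}, u ≤ v → p ^ u ≤ p ^ v := fun h =>
    Nat.pow_le_pow_right hp.pos h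
  have hkj : k < p ^ j := lt_of_lt_of_le hk (hple hLj)
  have hki : k < p ^ i := lt_of_lt_of_le hkj (hple hji)
  rw [Nat.mod_eq_of_lt hkj]
  rw [Nat.mod_eq_of_lt hki] at hc
  set q := m % p ^ i with hq
  have hqlt : q < p ^ i := Nat.mod_lt _ (pow_pos hp.pos _)
  set r := p ^ i - q with hr
  have hr1 : 1 ≤ r := by omega
  have hrk : r ≤ k := by omega
  have hmj : m % p ^ j = q % p ^ j := by
    rw [hq, Nat.mod_mod_of_dvd _ (pow_dvd_pow p hji)]
  have hqr : q + r = p ^ i := by omega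
  have hij0 : p ^ i % p ^ j = 0 := Nat.dvd_iff_mod_eq_zero.mp (pow_dvd_pow p hji)
  have hqj : q % p ^ j < p ^ j := Nat.mod_lt _ (pow_pos hp.pos _)
  have hrj : r < p ^ j := lt_of_le_of_lt hrk hkj
  have hsum : (q % p ^ j + r) % p ^ j = 0 := by
    have := Nat.add_mod q r (p ^ j)
    rw [hqr, hij0, Nat.mod_eq_of_lt hrj] at this
    omega
  obtain ⟨c, hcq⟩ := Nat.dvd_iff_mod_eq_zero.mpr hsum
  rw [hmj]
  rcases c with _ | _ | c
  · simp at hcq; omega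
  · simp only [Nat.zero_add, mul_one] at hcq; omega
  · have : p ^ j * 2 ≤ p ^ j * (c + 1 + 1) := Nat.mul_le_mul_left _ (by omega)
    omega

lemma min_choose_eq_card {p : ℕ} (hp : p.Prime) (L K k n : ℕ) (hL : 1 ≤ L) (hk : k < p ^ L)
    (hkn : k ≤ n) :
    min (padicValNat p (n.choose k)) K =
      min (((Finset.Ico 1 (L + K + 1)).filter
        (fun i => p ^ i ≤ k % p ^ i + (n - k) % p ^ i)).card) K := by
  haveI : Fact p.Prime := ⟨hp⟩
  set b := max (L + K + 1) (Nat.log p n + 1) with hb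
  have hlog : Nat.log p n < b := lt_of_lt_of_le (Nat.lt_succ_self _) (le_max_right _ _)
  have hnu : padicValNat p (n.choose k) =
      ((Finset.Ico 1 b).filter (fun i => p ^ i ≤ k % p ^ i + (n - k) % p ^ i)).card :=
    padicValNat_choose hkn hlog
  have hsub : ((Finset.Ico 1 (L+K+1)).filter (fun i => p ^ i ≤ k % p ^ i + (n - k) % p ^ i)).card
      ≤ ((Finset.Ico 1 b).filter (fun i => p ^ i ≤ k % p ^ i + (n - k) % p ^ i)).card :=
    Finset.card_le_card (Finset.filter_subset_filter _
      (Finset.Ico_subset_Ico le_rfl (le_max_left _ _)))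
  by_cases hex : ∃ i ∈ Finset.Ico (L + K + 1) b, p ^ i ≤ k % p ^ i + (n - k) % p ^ i
  · obtain ⟨i, hi, hci⟩ := hex
    have hi1 : L + K + 1 ≤ i := (Finset.mem_Ico.1 hi).1
    have hA : K + 1 ≤ ((Finset.Ico 1 (L+K+1)).filter
        (fun i => p ^ i ≤ k % p ^ i + (n - k) % p ^ i)).card := by
      have hsub2 : Finset.Icc L (L + K) ⊆ (Finset.Ico 1 (L+K+1)).filter
          (fun i => p ^ i ≤ k % p ^ i + (n - k) % p ^ i) := by
        intro j hj
        rw [Finset.mem_Icc] at hj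
        rw [Finset.mem_filter, Finset.mem_Ico]
        exact ⟨⟨by omega, by omega⟩, carry_mono hp hk hj.1 (by omega) hci⟩
      calc K + 1 = (Finset.Icc L (L + K)).card := by rw [Nat.card_Icc]; omega
        _ ≤ _ := Finset.card_le_card hsub2
    rw [hnu]
    omega
  · have heq : (Finset.Ico 1 b).filter (fun i => p ^ i ≤ k % p ^ i + (n - k) % p ^ i)
        = (Finset.Ico 1 (L+K+1)).filter (fun i => p ^ i ≤ k % p ^ i + (n - k) % p ^ i) := by
      apply Finset.Subset.antisymm
      · intro j hj
        rw [Finset.mem_filter, Finset.mem_Ico] at hj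
        rw [Finset.mem_filter, Finset.mem_Ico]
        refine ⟨⟨hj.1.1, ?_⟩, hj.2⟩
        by_contra h
        exact hex ⟨j, Finset.mem_Ico.2 ⟨by omega, hj.1.2⟩, hj.2⟩
      · exact Finset.filter_subset_filter _
          (Finset.Ico_subset_Ico le_rfl (le_max_left _ _))
    rw [hnu, heq]

lemma min_choose_periodic {p : ℕ} (hp : p.Prime) (L K k n : ℕ) (hL : 1 ≤ L) (hk : k < p ^ L)
    (hkn : k ≤ n) :
    min (padicValNat p ((n + p ^ (L + K)).choose k)) K = min (padicValNat p (n.choose k)) K := by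
  rw [min_choose_eq_card hp L K k n hL hk hkn,
      min_choose_eq_card hp L K k _ hL hk (le_trans hkn (Nat.le_add_right _ _))]
  congr 2
  apply Finset.filter_congr
  intro i hi
  rw [Finset.mem_Ico] at hi
  have hmod : (n + p ^ (L + K) - k) % p ^ i = (n - k) % p ^ i := by
    have h1 : n + p ^ (L + K) - k = (n - k) + p ^ i * p ^ (L + K - i) := by
      rw [← pow_add]
      have h2 : i + (L + K - i) = L + K := by omega
      rw [h2]; omega
    rw [h1, Nat.add_mul_mod_self_left]
  rw [hmod]

lemma jordanBlock_pow_apply (s : ℕ) (lam : ℤ) (n : ℕ) (a b : Fin s) :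
    (jordanBlock s lam ^ n) a b =
      if (a : ℕ) ≤ (b : ℕ) ∧ (b : ℕ) - (a : ℕ) ≤ n then
        (n.choose ((b : ℕ) - (a : ℕ)) : ℤ) * lam ^ (n - ((b : ℕ) - (a : ℕ)))
      else 0 := by
  induction n generalizing a b with
  | zero =>
    rw [pow_zero, Matrix.one_apply]
    by_cases h : a = b
    · subst h; simp
    · have : ¬((a : ℕ) ≤ b ∧ (b : ℕ) - a ≤ 0) := by
        intro ⟨h1, h2⟩; exact h (Fin.ext (by omega))
      rw [if_neg h, if_neg this]
  | succ n ih =>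
    rw [pow_succ, Matrix.mul_apply]
    rcases Nat.eq_zero_or_pos (b : ℕ) with hb0 | hbpos
    · rw [Finset.sum_eq_single b]
      · rw [ih, jordanBlock, if_pos rfl]
        by_cases h : (a : ℕ) ≤ b ∧ (b : ℕ) - a ≤ n
        · rw [if_pos h, if_pos ⟨h.1, by omega⟩]
          have h0 : (b : ℕ) - (a : ℕ) = 0 := by omega
          rw [h0]
          simp [pow_succ]
        · rw [if_neg h, if_neg (by omega), zero_mul]
      · intro c _ hc
        rw [jordanBlock]
        rw [if_neg hc, if_neg (by omega), mul_zero]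
      · intro h; exact absurd (Finset.mem_univ b) h
    · have hbs : (b : ℕ) - 1 < s := by omega
      set b' : Fin s := ⟨(b : ℕ) - 1, hbs⟩ with hb'
      have hb'v : (b' : ℕ) = (b : ℕ) - 1 := rfl
      have hbb' : b' ≠ b := by
        intro h; rw [Fin.ext_iff] at h; omega
      have hsplit : ∀ c : Fin s, jordanBlock s lam c b =
          (if c = b then lam else 0) + (if c = b' then 1 else 0) := by
        intro c
        rw [jordanBlock]
        by_cases h1 : c = b
        · rw [if_pos h1, if_pos h1, if_neg (by rw [h1]; exact hbb'.symm)]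
          ring
        · rw [if_neg h1, if_neg h1, zero_add]
          by_cases h2 : c = b'
          · rw [if_pos h2, if_pos (by rw [h2]; omega)]
          · rw [if_neg h2, if_neg (by
              intro h3
              exact h2 (Fin.ext (by omega)))]
      calc (∑ c, (jordanBlock s lam ^ n) a c * jordanBlock s lam c b)
          = ∑ c, ((jordanBlock s lam ^ n) a c * (if c = b then lam else 0)
              + (jordanBlock s lam ^ n) a c * (if c = b' then 1 else 0)) := by
            apply Finset.sum_congr rfl; intro c _; rw [hsplit c]; ring
        _ = (jordanBlock s lam ^ n) a b * lam + (jordanBlock s lam ^ n) a b' := by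
            rw [Finset.sum_add_distrib]
            congr 1
            · simp [mul_ite, Finset.sum_ite_eq']
            · simp [mul_ite, Finset.sum_ite_eq']
        _ = _ := by
            rw [ih, ih]
            split_ifs with h1 h2 h3 h4 h5 h6 h7
            all_goals try (exfalso; omega)
            · obtain ⟨k', hk'⟩ : ∃ k', (b : ℕ) - (a : ℕ) = k' + 1 :=
                ⟨(b : ℕ) - a - 1, by omega⟩
              have hbk' : (b' : ℕ) - (a : ℕ) = k' := by omega
              rw [hk', hbk', Nat.choose_succ_succ n k']
              have hc1 : n + 1 - (k' + 1) = n - k' := by omega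
              have hc2 : n - k' = n - (k' + 1) + 1 := by omega
              rw [hc1]
              push_cast
              rw [hc2, pow_succ]
              ring
            · have hk0 : (b : ℕ) - (a : ℕ) = 0 := by omega
              rw [hk0]
              simp [pow_succ]
            · have e1 : (b : ℕ) - (a : ℕ) = n + 1 := by omega
              have e2 : (b' : ℕ) - (a : ℕ) = n := by omega
              rw [e1, e2]
              simp
            · ring

lemma padicValInt_mul_pow {p : ℕ} (hp : p.Prime) (c : ℕ) (z : ℤ) (e : ℕ) (hc : c ≠ 0)
    (hz : z ≠ 0) :
    padicValInt p ((c : ℤ) * z ^ e) = padicValNat p c + e * padicValInt p z := by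
  haveI : Fact p.Prime := ⟨hp⟩
  rw [padicValInt.mul (by exact_mod_cast hc) (pow_ne_zero _ hz), padicValInt.of_nat]
  congr 1
  show padicValNat p ((z ^ e).natAbs) = e * padicValNat p z.natAbs
  rw [Int.natAbs_pow, padicValNat.pow _ e]

end Aux

set_option maxHeartbeats 2000000 in
/-- For a direct sum `J = J₁ ⊕ ⋯ ⊕ J_d` of Jordan blocks with integer eigenvalues,
at least one of which is nonzero, the sequence `n ↦ ν_p(J^{n+1}) - ν_p(J^n)` is
eventually periodic. -/
theorem matPadicVal_jordanSum_diff_eventuallyPeriodic (p : ℕ) (hp : p.Prime)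
    (d : ℕ) (s : Fin d → ℕ) (hs : ∀ i, 0 < s i) (lam : Fin d → ℤ)
    (hlam : ∃ i, lam i ≠ 0)
    (J : Matrix (Σ i, Fin (s i)) (Σ i, Fin (s i)) ℤ)
    (hJ : J = Matrix.blockDiagonal' fun i => jordanBlock (s i) (lam i)) :
    ∃ n₀ T : ℕ, 1 ≤ T ∧ ∀ n, n₀ ≤ n →
      (matPadicVal p (J ^ (n + T + 1)) : ℤ) - matPadicVal p (J ^ (n + T)) =
        (matPadicVal p (J ^ (n + 1)) : ℤ) - matPadicVal p (J ^ n) := by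
  haveI : Fact p.Prime := ⟨hp⟩
  subst hJ
  obtain ⟨iw, hiw⟩ := hlam
  obtain ⟨B, hsB, hB1⟩ : ∃ B : ℕ, (∀ i, s i ≤ B) ∧ 1 ≤ B :=
    ⟨Finset.univ.sup s, fun i => Finset.le_sup (Finset.mem_univ i),
      le_trans (hs iw) (Finset.le_sup (Finset.mem_univ iw))⟩
  -- choose eigenvalue of minimal valuation among nonzero eigenvalues
  obtain ⟨i₀, hi₀mem, hi₀min⟩ := Finset.exists_min_image
    (Finset.univ.filter (fun i => lam i ≠ 0)) (fun i => padicValInt p (lam i))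
    ⟨iw, by simp [hiw]⟩
  have hi₀ : lam i₀ ≠ 0 := by
    simpa using hi₀mem
  have hmin : ∀ i, lam i ≠ 0 → padicValInt p (lam i₀) ≤ padicValInt p (lam i) := by
    intro i hi
    exact hi₀min i (by simp [hi])
  clear hi₀min
  obtain ⟨v, hv⟩ : ∃ v : ℕ, v = padicValInt p (lam i₀) := ⟨_, rfl⟩
  rw [← hv] at hmin
  obtain ⟨K, hK⟩ : ∃ K : ℕ, K = B * v + B := ⟨_, rfl⟩
  obtain ⟨T, hT⟩ : ∃ T : ℕ, T = p ^ (B + K) := ⟨_, rfl⟩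
  have hT1 : 1 ≤ T := by rw [hT]; exact Nat.one_le_pow _ _ hp.pos
  -- the index finset
  set F : Finset (Σ i, Fin (s i)) := Finset.univ.filter
    (fun x => lam x.1 ≠ 0 ∧ padicValInt p (lam x.1) = v) with hFdef
  have hFmem : (⟨i₀, ⟨0, hs i₀⟩⟩ : Σ i, Fin (s i)) ∈ F := by
    rw [hFdef, Finset.mem_filter]
    exact ⟨Finset.mem_univ _, hi₀, hv.symm⟩
  have hFne : F.Nonempty := ⟨_, hFmem⟩
  set m : ℕ → ℤ := fun n => F.inf' hFne
    (fun x => ((min (padicValNat p (n.choose (x.2 : ℕ))) K : ℕ) : ℤ) - (x.2 : ℕ) * v) with hm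
  -- powers are block diagonal
  have hpow : ∀ n : ℕ, (Matrix.blockDiagonal' (fun i => jordanBlock (s i) (lam i))) ^ n
      = Matrix.blockDiagonal' (fun i => jordanBlock (s i) (lam i) ^ n) := by
    intro n
    have hpi : (fun i => jordanBlock (s i) (lam i) ^ n)
        = ((fun i => jordanBlock (s i) (lam i)) ^ n) := by
      funext i
      rw [Pi.pow_apply]
    rw [hpi, Matrix.blockDiagonal'_pow]
  -- the key valuation formula
  have key : ∀ n : ℕ, B * v + 2 * B ≤ n →
      ((matPadicVal p ((Matrix.blockDiagonal' (fun i => jordanBlock (s i) (lam i))) ^ n) : ℤ))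
        = (n : ℤ) * v + m n := by
    intro n hn
    have hnB : B ≤ n := by omega
    rw [hpow n]
    set M := Matrix.blockDiagonal' (fun i => jordanBlock (s i) (lam i) ^ n) with hM
    have hMapp : ∀ (i : Fin d) (a b : Fin (s i)),
        M ⟨i, a⟩ ⟨i, b⟩ = if (a : ℕ) ≤ (b : ℕ) ∧ (b : ℕ) - a ≤ n then
          ((n.choose ((b : ℕ) - a)) : ℤ) * lam i ^ (n - ((b : ℕ) - a)) else 0 := by
      intro i a b
      rw [hM, Matrix.blockDiagonal'_apply_eq]
      exact jordanBlock_pow_apply _ _ n a b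
    have hadef : matPadicVal p M
        = sInf {w : ℕ | ∃ x y, M x y ≠ 0 ∧ padicValInt p (M x y) = w} := rfl
    -- valuation of entries within a block
    have hentry : ∀ (i : Fin d) (a b : Fin (s i)), lam i ≠ 0 → (a : ℕ) ≤ (b : ℕ) →
        M ⟨i, a⟩ ⟨i, b⟩ ≠ 0 ∧
          padicValInt p (M ⟨i, a⟩ ⟨i, b⟩)
            = padicValNat p (n.choose ((b : ℕ) - a)) + (n - ((b : ℕ) - a)) * padicValInt p (lam i) := by
      intro i a b hlne hab
      have hkn : (b : ℕ) - a ≤ n := by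
        have := b.isLt
        have := hsB i
        omega
      rw [hMapp i a b, if_pos ⟨hab, hkn⟩]
      have hch : n.choose ((b : ℕ) - a) ≠ 0 := Nat.choose_pos hkn |>.ne'
      constructor
      · exact mul_ne_zero (by exact_mod_cast hch) (pow_ne_zero _ hlne)
      · exact padicValInt_mul_pow hp _ _ _ hch hlne
    -- nonemptiness of the valuation set
    have hSne : {w : ℕ | ∃ x y, M x y ≠ 0 ∧ padicValInt p (M x y) = w}.Nonempty := by
      obtain ⟨hne, hval⟩ := hentry i₀ ⟨0, hs i₀⟩ ⟨0, hs i₀⟩ hi₀ le_rfl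
      exact ⟨_, ⟨_, _, hne, hval⟩⟩
    -- upper bound : a ≤ n v + m n
    have hub : (matPadicVal p M : ℤ) ≤ (n : ℤ) * v + m n := by
      have h1 : ∀ x ∈ F, (matPadicVal p M : ℤ) - (n : ℤ) * v ≤
          ((min (padicValNat p (n.choose (x.2 : ℕ))) K : ℕ) : ℤ) - (x.2 : ℕ) * v := by
        rintro ⟨i, kf⟩ hx
        dsimp only
        rw [hFdef, Finset.mem_filter] at hx
        obtain ⟨-, hlne, hvi⟩ := hx
        dsimp only at hlne hvi
        have hks : (kf : ℕ) < s i := kf.isLt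
        have hkn : (kf : ℕ) ≤ n := by have := hsB i; omega
        by_cases hnu : padicValNat p (n.choose (kf : ℕ)) ≤ K
        · obtain ⟨hne, hval⟩ := hentry i ⟨0, hs i⟩ kf hlne (by simp)
          have hle : matPadicVal p M ≤
              padicValNat p (n.choose ((kf : ℕ) - 0)) + (n - ((kf : ℕ) - 0)) * padicValInt p (lam i) := by
            rw [hadef]
            exact Nat.sInf_le ⟨_, _, hne, hval⟩
          have hle2 : matPadicVal p M ≤
              padicValNat p (n.choose (kf : ℕ)) + (n - (kf : ℕ)) * v := by
            rw [← hvi]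
            simpa using hle
          have hle' : (matPadicVal p M : ℤ) ≤
              (padicValNat p (n.choose (kf : ℕ)) : ℤ) + ((n : ℤ) - (kf : ℕ)) * v := by
            have h' := (Nat.cast_le (α := ℤ)).mpr hle2
            rw [Nat.cast_add, Nat.cast_mul, Nat.cast_sub hkn] at h'
            exact h'
          rw [min_eq_left hnu]
          have : ((kf : ℕ) : ℤ) ≤ (n : ℤ) := by exact_mod_cast hkn
          nlinarith [hle']
        · obtain ⟨hne, hval⟩ := hentry i ⟨0, hs i⟩ ⟨0, hs i⟩ hlne le_rfl
          have hle : matPadicVal p M ≤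
              padicValNat p (n.choose 0) + (n - 0) * padicValInt p (lam i) := by
            rw [hadef]
            exact Nat.sInf_le ⟨_, _, hne, hval⟩
          simp only [Nat.choose_zero_right, padicValNat.one, Nat.sub_zero, zero_add] at hle
          have hle' : (matPadicVal p M : ℤ) ≤ (n : ℤ) * v := by
            rw [hvi] at hle
            exact_mod_cast hle
          rw [min_eq_right (le_of_not_ge hnu)]
          have hkv : ((kf : ℕ) : ℤ) * v ≤ (K : ℤ) := by
            have hsBi := hsB i
            have h1 : (kf : ℕ) * v ≤ B * v := Nat.mul_le_mul_right _ (by omega)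
            have : (kf : ℕ) * v ≤ K := by omega
            exact_mod_cast this
          linarith
      have h2 := Finset.le_inf' hFne _ h1
      have h3 : m n = F.inf' hFne
          (fun x => ((min (padicValNat p (n.choose (x.2 : ℕ))) K : ℕ) : ℤ) - (x.2 : ℕ) * v) := rfl
      rw [h3]
      linarith
    -- lower bound : a ≥ n v + m n
    have hlb : (n : ℤ) * v + m n ≤ (matPadicVal p M : ℤ) := by
      have hmem : matPadicVal p M ∈ {w : ℕ | ∃ x y, M x y ≠ 0 ∧ padicValInt p (M x y) = w} := by
        rw [hadef]; exact Nat.sInf_mem hSne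
      obtain ⟨⟨i, ai⟩, ⟨j, bi⟩, hne, hval⟩ := hmem
      have hij : i = j := by
        by_contra hij
        exact hne (Matrix.blockDiagonal'_apply_ne _ _ _ hij)
      subst hij
      rw [hMapp i ai bi] at hne hval
      by_cases hcond : (ai : ℕ) ≤ (bi : ℕ) ∧ (bi : ℕ) - ai ≤ n
      swap
      · rw [if_neg hcond] at hne; exact absurd rfl hne
      rw [if_pos hcond] at hne hval
      set k : ℕ := (bi : ℕ) - ai with hkdef
      have hks : k < s i := by have := bi.isLt; omega
      have hkB : k + 1 ≤ B := by have := hsB i; omega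
      have hkltn : k < n := by omega
      have hlne : lam i ≠ 0 := by
        intro h0
        rw [h0] at hne
        exact hne (by rw [zero_pow (by omega), mul_zero])
      have hch : n.choose k ≠ 0 := Nat.choose_pos (by omega) |>.ne'
      have hvale : matPadicVal p M
          = padicValNat p (n.choose k) + (n - k) * padicValInt p (lam i) := by
        rw [← hval, padicValInt_mul_pow hp _ _ _ hch hlne]
      have hvlei : v ≤ padicValInt p (lam i) := hmin i hlne
      by_cases hvi : padicValInt p (lam i) = v
      · -- minimal-valuation block
        have hxF : (⟨i, ⟨k, hks⟩⟩ : Σ i, Fin (s i)) ∈ F := by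
          simp [hFdef, hlne, hvi]
        have h2 : m n ≤ ((min (padicValNat p (n.choose k)) K : ℕ) : ℤ) - (k : ℤ) * v := by
          have := Finset.inf'_le
            (fun x : Σ i, Fin (s i) =>
              ((min (padicValNat p (n.choose (x.2 : ℕ))) K : ℕ) : ℤ) - (x.2 : ℕ) * v) hxF
          exact this
        have h3 : ((min (padicValNat p (n.choose k)) K : ℕ) : ℤ) ≤ (padicValNat p (n.choose k) : ℤ) := by
          exact_mod_cast min_le_left _ _
        have h4 : (matPadicVal p M : ℤ)
            = (padicValNat p (n.choose k) : ℤ) + ((n : ℤ) - k) * v := by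
          rw [hvale]
          push_cast
          rw [Nat.cast_sub (by omega), hvi]
        rw [h4]
        nlinarith [h2, h3]
      · -- dominated block
        have hvi1 : (v : ℤ) + 1 ≤ (padicValInt p (lam i) : ℤ) := by
          have : v + 1 ≤ padicValInt p (lam i) := by omega
          exact_mod_cast this
        have hmn0 : m n ≤ 0 := by
          have h2 := Finset.inf'_le
            (fun x : Σ i, Fin (s i) =>
              ((min (padicValNat p (n.choose (x.2 : ℕ))) K : ℕ) : ℤ) - (x.2 : ℕ) * v) hFmem
          have h3 : m n = F.inf' hFne
              (fun x => ((min (padicValNat p (n.choose (x.2 : ℕ))) K : ℕ) : ℤ)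
                - (x.2 : ℕ) * v) := rfl
          rw [h3]
          exact le_trans h2 (by simp)
        have h4 : (matPadicVal p M : ℤ)
            = (padicValNat p (n.choose k) : ℤ)
              + ((n : ℤ) - k) * (padicValInt p (lam i) : ℤ) := by
          rw [hvale]
          push_cast
          rw [Nat.cast_sub (by omega)]
        -- (n - k) * vi ≥ (n - k)(v+1) ≥ n v  given  n ≥ B(v+1)+B ≥ k(v+1)
        have hkv : (k : ℤ) * ((v : ℤ) + 1) ≤ (n : ℤ) := by
          have h5 : k * (v + 1) ≤ (B - 1) * (v + 1) := Nat.mul_le_mul_right _ (by omega)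
          have h6 : (B - 1) * (v + 1) ≤ B * v + 2 * B := by
            have h7 : (B - 1) * (v + 1) ≤ B * (v + 1) := Nat.mul_le_mul_right _ (by omega)
            have h8 : B * (v + 1) = B * v + B := by ring
            omega
          have : k * (v + 1) ≤ n := by omega
          exact_mod_cast this
        have hnk : (0 : ℤ) ≤ (n : ℤ) - k := by
          have : (k : ℤ) ≤ n := by exact_mod_cast (by omega : k ≤ n)
          linarith
        have hnu0 : (0 : ℤ) ≤ (padicValNat p (n.choose k) : ℤ) := by positivity
        rw [h4]
        nlinarith [hvi1, hnk, hkv, hnu0, hmn0]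
    exact le_antisymm hub hlb
  -- periodicity of m
  have hper : ∀ n' : ℕ, B ≤ n' → m (n' + T) = m n' := by
    intro n' hn'
    rw [hm]
    apply Finset.inf'_congr hFne rfl
    rintro ⟨i, kf⟩ hx
    dsimp only
    have hks : (kf : ℕ) < s i := kf.isLt
    have hkB : (kf : ℕ) < B := lt_of_lt_of_le hks (hsB i)
    have hkp : (kf : ℕ) < p ^ B :=
      lt_of_lt_of_le hkB (le_of_lt (Nat.lt_pow_self (n := B) hp.one_lt))
    have hmc := min_choose_periodic hp B K (kf : ℕ) n' hB1 hkp
      (le_trans (le_of_lt hkB) hn')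
    rw [hT, hmc]
  refine ⟨B * v + 2 * B, T, hT1, ?_⟩
  intro n hn
  have h1 := key n hn
  have h2 := key (n + 1) (by omega)
  have h3 := key (n + T) (by omega)
  have h4 := key (n + T + 1) (by omega)
  have e1 : m (n + T) = m n := hper n (by omega)
  have e2 : m (n + T + 1) = m (n + 1) := by
    have he : n + T + 1 = (n + 1) + T := by omega
    rw [he]
    exact hper (n + 1) (by omega)
  rw [h1, h2, h3, h4, e1, e2]
  push_cast
  ring
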